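/- Let A be a real m×n matrix, b ∈ ℝ^m, and x ∈ ℝⁿ. Fix a row index i with A A_{i,:}ᵀ ≠ 0 and define the RKAS update x⁺ = x − α A_{i,:}ᵀ with α = ⟨A A_{i,:}ᵀ, A x − b⟩ / ‖A A_{i,:}ᵀ‖₂². Then x⁺ minimizes ‖A y − A x̄‖₂² over the line y = x − t A_{i,:}ᵀ, t ∈ ℝ: for every t ∈ ℝ, ‖A(x − t A_{i,:}ᵀ) − A x̄‖₂² ≥ ‖A x⁺ − A x̄‖₂². -/
import Mathlib


open Matrix
open scoped RealInnerProductSpace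

/-- `mulE A x` is the matrix-vector product `A x`, viewed as a map between
Euclidean spaces (so that `‖·‖` is the Euclidean norm and `⟪·,·⟫` the dot product). -/
noncomputable def mulE {m n : ℕ} (A : Matrix (Fin m) (Fin n) ℝ)
    (x : EuclideanSpace ℝ (Fin n)) : EuclideanSpace ℝ (Fin m) :=
  Matrix.toEuclideanLin A x

/-- `rowE A i` is the `i`-th row of `A` (i.e. the vector `A_{i,:}ᵀ`),
viewed as an element of Euclidean space. -/
noncomputable def rowE {m n : ℕ} (A : Matrix (Fin m) (Fin n) ℝ) (i : Fin m) :
    EuclideanSpace ℝ (Fin n) :=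
  (EuclideanSpace.equiv (Fin n) ℝ).symm (A i)

lemma adj_mulE {m n : ℕ} (A : Matrix (Fin m) (Fin n) ℝ) (u : EuclideanSpace ℝ (Fin n))
    (w : EuclideanSpace ℝ (Fin m)) : ⟪mulE A u, w⟫ = ⟪u, mulE Aᵀ w⟫ := by
  simp [mulE, Matrix.toEuclideanLin_apply, EuclideanSpace.inner_eq_star_dotProduct,
    Matrix.mulVec_transpose]
  have := Matrix.dotProduct_mulVec ((WithLp.equiv 2 (Fin m → ℝ)) w) A ((WithLp.equiv 2 (Fin n → ℝ)) u)
  simp [dotProduct, mul_comm] at this ⊢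
  rw [← this]

/-- the RKAS iterate `x⁺` minimizes `‖A y − A x̄‖²` over the line
`y = x − t A_{i,:}ᵀ`, `t ∈ ℝ`. -/
theorem rkas_step_line_minimizer (m n : ℕ) (A : Matrix (Fin m) (Fin n) ℝ)
    (b : EuclideanSpace ℝ (Fin m)) (x : EuclideanSpace ℝ (Fin n))
    -- `x̄ = A†b`: the unique vector in the row space `Range(Aᵀ)` satisfying the
    -- normal equations `Aᵀ A x̄ = Aᵀ b`
    (xbar : EuclideanSpace ℝ (Fin n))
    (hxbar_mem : xbar ∈ Set.range (mulE Aᵀ))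
    (hxbar_normal : mulE Aᵀ (mulE A xbar) = mulE Aᵀ b)
    -- a row index `i` with `A A_{i,:}ᵀ ≠ 0`
    (i : Fin m) (hAi : mulE A (rowE A i) ≠ 0)
    -- the RKAS stepsize and update
    (α : ℝ) (hα : α = ⟪mulE A (rowE A i), mulE A x - b⟫ / ‖mulE A (rowE A i)‖ ^ 2)
    (xplus : EuclideanSpace ℝ (Fin n)) (hxplus : xplus = x - α • rowE A i) :
    ∀ t : ℝ,
      ‖mulE A (x - t • rowE A i) - mulE A xbar‖ ^ 2
        ≥ ‖mulE A xplus - mulE A xbar‖ ^ 2 := by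
  intro t
  set r := rowE A i with hr
  set v := mulE A r with hv
  set c := mulE A x - mulE A xbar with hc
  have hlin : ∀ (s : ℝ), mulE A (x - s • r) - mulE A xbar = c - s • v := by
    intro s
    simp [mulE, map_sub, _root_.map_smul, hc, hv]
    abel
  have hexp : ∀ (s : ℝ), ‖c - s • v‖ ^ 2 = ‖c‖ ^ 2 - 2 * s * ⟪v, c⟫ + s ^ 2 * ‖v‖ ^ 2 := by
    intro s
    rw [norm_sub_sq_real, real_inner_smul_right, norm_smul, real_inner_comm]
    simp [mul_pow]
    ring
  have hvne : ‖v‖ ^ 2 ≠ 0 := by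
    simpa using hAi
  have horth : ⟪v, mulE A xbar - b⟫ = 0 := by
    rw [hv, adj_mulE]
    have h0 : mulE Aᵀ (mulE A xbar - b) = 0 := by
      have : mulE Aᵀ (mulE A xbar - b) = mulE Aᵀ (mulE A xbar) - mulE Aᵀ b := by
        simp [mulE, map_sub]
      rw [this, hxbar_normal, sub_self]
    rw [h0, inner_zero_right]
  have hkey : α * ‖v‖ ^ 2 = ⟪v, c⟫ := by
    have h1 : ⟪v, mulE A x - b⟫ = ⟪v, c⟫ + ⟪v, mulE A xbar - b⟫ := by
      rw [← inner_add_right]; congr 1; rw [hc]; abel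
    rw [hα, div_mul_cancel₀ _ hvne, h1, horth, add_zero]
  rw [hxplus, hlin, hlin, hexp, hexp]
  rw [← hkey]
  nlinarith [mul_nonneg (sq_nonneg (t - α)) (sq_nonneg ‖v‖)]
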